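/- For every d > 0 and every ε with 0 < ε < d/100 there exists n' such that the following holds for every graph G and all disjoint vertex subsets V1, V2 with |V1|, |V2| ≥ n': if (V1, V2) is a strongly ε-regular pair of density d, then for every v1 ∈ V1, v2 ∈ V2 and every odd k with 3 ≤ k ≤ 2(1 − 2ε/d)·min(|V1|, |V2|), the graph G contains a path of length k (with k edges) joining v1 and v2 all of whose vertices lie in V1 ∪ V2. -/

import Mathlib

open SimpleGraph

/-- `e(S,T)`: the number of ordered pairs `(v,w)` with `v ∈ S`, `w ∈ T` and `v` adjacent to `w`;
this counts edges with one end in `S` and the other in `T`, edges inside `S ∩ T` twice. -/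
noncomputable def interCount {V : Type} (G : SimpleGraph V) (S T : Set V) : ℕ :=
  {p : V × V | p.1 ∈ S ∧ p.2 ∈ T ∧ G.Adj p.1 p.2}.ncard

/-- The degree of a vertex. -/
noncomputable def degCount {V : Type} (G : SimpleGraph V) (v : V) : ℕ :=
  (G.neighborSet v).ncard

/-- The codegree of a pair of vertices. -/
noncomputable def codegCount {V : Type} (G : SimpleGraph V) (v w : V) : ℕ :=
  (G.neighborSet v ∩ G.neighborSet w).ncard

/-- A graph is `n`-fit if it has `2n-1` vertices, `⌈(n+1)(2n-1)/2⌉` edges, minimum degree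
exactly `n+1`, all codegrees within `n^0.7` of `n/2`, and `|e(S,T) - |S||T|/2| ≤ n^1.7`
for all vertex sets `S`, `T`. -/
def IsNFit {V : Type} (n : ℕ) (G : SimpleGraph V) : Prop :=
  Nat.card V = 2 * n - 1 ∧
  G.edgeSet.ncard = ((n + 1) * (2 * n - 1) + 1) / 2 ∧
  (∀ v : V, n + 1 ≤ degCount G v) ∧
  (∃ v : V, degCount G v = n + 1) ∧
  (∀ v w : V, v ≠ w → |(codegCount G v w : ℝ) - n / 2| ≤ (n : ℝ) ^ (0.7 : ℝ)) ∧
  (∀ S T : Set V, |(interCount G S T : ℝ) - S.ncard * T.ncard / 2| ≤ (n : ℝ) ^ (1.7 : ℝ))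

/-- `G` contains a cycle of length `m` (a copy of `C_m`). -/
def HasCycleLen {V : Type} (G : SimpleGraph V) (m : ℕ) : Prop :=
  ∃ (v : V) (c : G.Walk v v), c.IsCycle ∧ c.length = m

/-- `G` contains a path of length `k` (with `k` edges) joining `u` and `v`. -/
def HasPathLen {V : Type} (G : SimpleGraph V) (u v : V) (k : ℕ) : Prop :=
  ∃ p : G.Walk u v, p.IsPath ∧ p.length = k

/-- `G → (C_n, C_k)`: every red/blue coloring of the edges of `G` (the red edges forming a
subgraph `R ≤ G`, the blue ones being `G \ R`) yields a red `C_n` or a blue `C_k`. -/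
def ArrowsCC {V : Type} (G : SimpleGraph V) (n k : ℕ) : Prop :=
  ∀ R : SimpleGraph V, R ≤ G → HasCycleLen R n ∨ HasCycleLen (G \ R) k

/-- The density of a pair of vertex sets. -/
noncomputable def dens {V : Type} (G : SimpleGraph V) (S T : Set V) : ℝ :=
  (interCount G S T : ℝ) / (S.ncard * T.ncard)

/-- `(V1, V2)` is an `ε`-regular pair. -/
def IsRegularPair {V : Type} (G : SimpleGraph V) (ε : ℝ) (V1 V2 : Set V) : Prop :=
  ∀ W1 W2 : Set V, W1 ⊆ V1 → W2 ⊆ V2 →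
    ε * V1.ncard ≤ (W1.ncard : ℝ) → ε * V2.ncard ≤ (W2.ncard : ℝ) →
    |dens G V1 V2 - dens G W1 W2| ≤ ε

/-- `(V1, V2)` is a strongly `ε`-regular pair. -/
def IsStronglyRegularPair {V : Type} (G : SimpleGraph V) (ε : ℝ) (V1 V2 : Set V) : Prop :=
  IsRegularPair G ε V1 V2 ∧
  (∀ v ∈ V1, dens G V1 V2 * V2.ncard / 10 ≤ ((G.neighborSet v ∩ V2).ncard : ℝ)) ∧
  (∀ v ∈ V2, dens G V1 V2 * V1.ncard / 10 ≤ ((G.neighborSet v ∩ V1).ncard : ℝ))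

/-- A graph has property `M_t` if it contains a matching saturating `⌈t⌉` vertices which is
contained in a single non-bipartite connected component. -/
def PropertyM {V : Type} (H : SimpleGraph V) (t : ℝ) : Prop :=
  ∃ M : H.Subgraph, M.IsMatching ∧ ⌈t⌉ ≤ (M.verts.ncard : ℤ) ∧
    ∃ c : H.ConnectedComponent, M.verts ⊆ c.supp ∧ ¬ (H.induce c.supp).Colorable 2

section Aux
variable {V : Type} [Finite V] (G : SimpleGraph V)

/-- count of non-adjacent (incl. equal) pairs -/
noncomputable def nonCount (A B : Set V) : ℕ :=
  {p : V × V | p.1 ∈ A ∧ p.2 ∈ B ∧ ¬ G.Adj p.1 p.2}.ncard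

lemma pairCount_eq_sum (R : V → V → Prop) (A B : Set V) :
    {p : V × V | p.1 ∈ A ∧ p.2 ∈ B ∧ R p.1 p.2}.ncard
      = ∑ b ∈ (Set.toFinite B).toFinset, {a ∈ A | R a b}.ncard := by
  classical
  have hfin := Fintype.ofFinite V
  rw [Set.ncard_eq_toFinset_card _ (Set.toFinite _)]
  rw [Finset.card_eq_sum_card_fiberwise (f := Prod.snd)
    (t := (Set.toFinite B).toFinset)
    (fun x hx => by
      simp only [Finset.mem_coe, Set.Finite.mem_toFinset] at hx ⊢
      exact hx.2.1)]
  refine Finset.sum_congr rfl (fun b hb => ?_)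
  rw [Set.ncard_eq_toFinset_card _ (Set.toFinite _)]
  refine Finset.card_bij (fun p _ => p.1) ?_ ?_ ?_
  · intro p hp
    simp only [Finset.mem_filter, Set.Finite.mem_toFinset, Set.mem_setOf_eq] at hp
    simp only [Set.Finite.mem_toFinset, Set.mem_setOf_eq]
    exact ⟨hp.1.1, hp.2 ▸ hp.1.2.2⟩
  · intro p₁ h₁ p₂ h₂ h
    simp only [Finset.mem_filter, Set.Finite.mem_toFinset, Set.mem_setOf_eq] at h₁ h₂
    exact Prod.ext h (h₁.2.trans h₂.2.symm)
  · intro a ha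
    simp only [Set.Finite.mem_toFinset, Set.mem_setOf_eq] at ha
    refine ⟨(a, b), ?_, rfl⟩
    simp only [Finset.mem_filter, Set.Finite.mem_toFinset, Set.mem_setOf_eq]
    exact ⟨⟨ha.1, (Set.Finite.mem_toFinset _).1 hb, ha.2⟩, trivial⟩

end Aux

section Aux2
variable {V : Type} [Finite V] (G : SimpleGraph V)

lemma interCount_eq_sum (A B : Set V) :
    interCount G A B = ∑ b ∈ (Set.toFinite B).toFinset, (A ∩ G.neighborSet b).ncard := by
  rw [interCount, pairCount_eq_sum]
  refine Finset.sum_congr rfl fun b _ => ?_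
  congr 1
  ext a
  simp only [Set.mem_setOf_eq, Set.mem_inter_iff, mem_neighborSet]
  rw [G.adj_comm]

lemma nonCount_eq_sum (A B : Set V) :
    nonCount G A B = ∑ b ∈ (Set.toFinite B).toFinset, (A \ G.neighborSet b).ncard := by
  rw [nonCount, pairCount_eq_sum (fun a b => ¬ G.Adj a b)]
  refine Finset.sum_congr rfl fun b _ => ?_
  congr 1
  ext a
  simp only [Set.mem_setOf_eq, Set.mem_diff, mem_neighborSet]
  rw [G.adj_comm]

lemma interCount_add_nonCount (A B : Set V) :
    interCount G A B + nonCount G A B = A.ncard * B.ncard := by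
  rw [interCount_eq_sum, nonCount_eq_sum, ← Finset.sum_add_distrib]
  rw [Finset.sum_congr rfl
    (fun b _ => Set.ncard_inter_add_ncard_diff_eq_ncard A (G.neighborSet b) (Set.toFinite A))]
  rw [Finset.sum_const, ← Set.ncard_eq_toFinset_card _ (Set.toFinite B), smul_eq_mul,
    Nat.mul_comm]

lemma nonCount_mono {A A' B B' : Set V} (hA : A ⊆ A') (hB : B ⊆ B') :
    nonCount G A B ≤ nonCount G A' B' :=
  Set.ncard_le_ncard (fun p hp => ⟨hA hp.1, hB hp.2.1, hp.2.2⟩) (Set.toFinite _)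

lemma exists_adj_of_interCount_pos {A B : Set V} (h : 0 < interCount G A B) :
    ∃ a ∈ A, ∃ b ∈ B, G.Adj a b := by
  rw [interCount] at h
  obtain ⟨p, hp⟩ := (Set.ncard_pos (Set.toFinite _)).1 h
  exact ⟨p.1, hp.1, p.2, hp.2.1, hp.2.2⟩

lemma exists_adj_of_nonCount_lt {A B : Set V} (h : nonCount G A B < A.ncard * B.ncard) :
    ∃ a ∈ A, ∃ b ∈ B, G.Adj a b := by
  have h2 := interCount_add_nonCount G A B
  exact exists_adj_of_interCount_pos G (by omega)

lemma interCount_lt_of_forall {A B : Set V} (hB : B.Nonempty) {c : ℝ}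
    (h : ∀ b ∈ B, ((A ∩ G.neighborSet b).ncard : ℝ) < c) :
    (interCount G A B : ℝ) < c * B.ncard := by
  rw [interCount_eq_sum]
  push_cast
  calc (∑ b ∈ (Set.toFinite B).toFinset, ((A ∩ G.neighborSet b).ncard : ℝ))
      < ∑ _b ∈ (Set.toFinite B).toFinset, c := by
        refine Finset.sum_lt_sum_of_nonempty (by simpa using hB) ?_
        intro b hb
        exact h b (by simpa using hb)
    _ = c * B.ncard := by
        rw [Finset.sum_const, ← Set.ncard_eq_toFinset_card _ (Set.toFinite B), nsmul_eq_mul]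
        ring

lemma le_nonCount_of_forall {A B : Set V} {c : ℝ}
    (h : ∀ b ∈ B, c ≤ ((A \ G.neighborSet b).ncard : ℝ)) :
    c * B.ncard ≤ (nonCount G A B : ℝ) := by
  rw [nonCount_eq_sum]
  push_cast
  calc c * B.ncard = ∑ _b ∈ (Set.toFinite B).toFinset, c := by
        rw [Finset.sum_const, ← Set.ncard_eq_toFinset_card _ (Set.toFinite B), nsmul_eq_mul]
        ring
    _ ≤ _ := Finset.sum_le_sum (fun b hb => h b (by simpa using hb))

lemma interCount_le (A B : Set V) : interCount G A B ≤ A.ncard * B.ncard := by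
  have := interCount_add_nonCount G A B
  omega

end Aux2

section Aux3
variable {V : Type} [Finite V] {G : SimpleGraph V} {V1 V2 : Set V} {ε d : ℝ}

lemma dens_lower (hreg : IsRegularPair G ε V1 V2) (hd : dens G V1 V2 = d) (hε : 0 < ε)
    {W1 W2 : Set V} (h1 : W1 ⊆ V1) (h2 : W2 ⊆ V2)
    (hc1 : ε * V1.ncard ≤ (W1.ncard : ℝ)) (hc2 : ε * V2.ncard ≤ (W2.ncard : ℝ))
    (hV1 : 0 < V1.ncard) (hV2 : 0 < V2.ncard) :
    (d - ε) * (W1.ncard * W2.ncard) ≤ (interCount G W1 W2 : ℝ) := by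
  have hW1 : (0 : ℝ) < W1.ncard := by
    have : (0:ℝ) < ε * V1.ncard := by positivity
    linarith
  have hW2 : (0 : ℝ) < W2.ncard := by
    have : (0:ℝ) < ε * V2.ncard := by positivity
    linarith
  have h := hreg W1 W2 h1 h2 hc1 hc2
  rw [hd, abs_le] at h
  have hdle : d - ε ≤ dens G W1 W2 := by linarith [h.2]
  rw [dens] at hdle
  have hprod : (0:ℝ) < (W1.ncard : ℝ) * W2.ncard := by positivity
  calc (d - ε) * (W1.ncard * W2.ncard)
      ≤ (interCount G W1 W2 : ℝ) / ((W1.ncard : ℝ) * W2.ncard) * (W1.ncard * W2.ncard) := by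
        apply mul_le_mul_of_nonneg_right hdle hprod.le
    _ = (interCount G W1 W2 : ℝ) := by field_simp

lemma bad_small (hreg : IsRegularPair G ε V1 V2) (hd : dens G V1 V2 = d) (hε : 0 < ε)
    (hV1 : 0 < V1.ncard) (hV2 : 0 < V2.ncard)
    {T : Set V} (hT : T ⊆ V1) (hTc : ε * V1.ncard ≤ (T.ncard : ℝ))
    {c : ℝ} (hc : c ≤ (d - ε) * T.ncard) :
    (({u ∈ V2 | ((T ∩ G.neighborSet u).ncard : ℝ) < c}).ncard : ℝ) < ε * V2.ncard := by
  by_contra hcon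
  push_neg at hcon
  set bad := {u ∈ V2 | ((T ∩ G.neighborSet u).ncard : ℝ) < c} with hbad
  have hbadsub : bad ⊆ V2 := fun u hu => hu.1
  have hbadne : bad.Nonempty := by
    rw [← Set.ncard_pos (Set.toFinite _)]
    have hpos : (0:ℝ) < ε * V2.ncard := by positivity
    by_contra hb
    push_neg at hb
    have h0 : bad.ncard = 0 := Nat.le_zero.mp hb
    rw [h0] at hcon
    norm_num at hcon
    linarith
  have h1 := dens_lower hreg hd hε hT hbadsub hTc hcon hV1 hV2
  have h2 := interCount_lt_of_forall G hbadne (fun u hu => hu.2)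
  have hbpos : (0:ℝ) ≤ (bad.ncard : ℝ) := by positivity
  nlinarith

end Aux3

section Aux4
variable {V : Type} [Finite V] {G : SimpleGraph V} {V1 V2 : Set V} {ε d : ℝ}

set_option maxHeartbeats 1000000 in
lemma pair_step (hreg : IsRegularPair G ε V1 V2) (hd : dens G V1 V2 = d)
    (hε : 0 < ε) (hεd : 100 * ε < d) (hd1 : d ≤ 1)
    (hV1 : 0 < V1.ncard) (hV2 : 0 < V2.ncard)
    {U1 U2 D : Set V} (hU1 : U1 ⊆ V1) (hU2 : U2 ⊆ V2) (hD : D ⊆ U2)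
    (hU1big : (2 * ε / d - ε) * V1.ncard ≤ (U1.ncard : ℝ))
    (hU2big : 2 * ε * V2.ncard ≤ (U2.ncard : ℝ))
    (hDbig : (U2.ncard : ℝ) - ε * V2.ncard ≤ (D.ncard : ℝ))
    (hεN1c : 100 ≤ ε * V1.ncard)
    {y : V} (hGood : (d - ε) * U1.ncard - 1 ≤ ((U1 ∩ G.neighborSet y).ncard : ℝ)) :
    ∃ x ∈ U1, ∃ x' ∈ D, G.Adj y x ∧ G.Adj x x' := by
  have hd0 : 0 < d := by linarith
  have hdε : 0 < d - ε := by linarith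
  obtain ⟨C, hC⟩ : ∃ C, C = U1 ∩ G.neighborSet y := ⟨_, rfl⟩
  rw [← hC] at hGood
  have hCsub : C ⊆ V1 := by rw [hC]; exact fun x hx => hU1 hx.1
  have hCU1 : C ⊆ U1 := by rw [hC]; exact Set.inter_subset_left
  have hDsubV2 : D ⊆ V2 := fun x hx => hU2 (hD hx)
  have hN1pos : (0:ℝ) < V1.ncard := by exact_mod_cast hV1
  have hN2pos : (0:ℝ) < V2.ncard := by exact_mod_cast hV2
  have hA : 2 * ε / d * d = 2 * ε := div_mul_cancel₀ _ (ne_of_gt hd0)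
  have hεA : ε ≤ 2 * ε / d - ε := by
    rw [le_sub_iff_add_le, ← sub_nonneg]
    have h5 : (2 * ε / d - (ε + ε)) * d = 2 * ε - (ε + ε) * d := by
      rw [sub_mul, hA]
    have h6 : 0 ≤ 2 * ε - (ε + ε) * d := by nlinarith
    nlinarith [h5, h6, hd0]
  have hU1e : ε * V1.ncard ≤ (U1.ncard : ℝ) := by nlinarith
  have hU2e : ε * V2.ncard ≤ (U2.ncard : ℝ) := by nlinarith
  have hDe : ε * V2.ncard ≤ (D.ncard : ℝ) := by linarith
  have hU1pos : (0:ℝ) < U1.ncard := by nlinarith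
  have hU2pos : (0:ℝ) < U2.ncard := by nlinarith
  have hkey : ∃ x ∈ C, ∃ x' ∈ D, G.Adj x x' := by
    by_cases hcase : d ≤ 4/5
    · -- sparse case : use regularity on (C, D)
      have hcoef : (11/10) * ε ≤ (d - ε) * (2 * ε / d - ε) := by
        have h5 : (11/10) * ε * d ≤ ((d - ε) * (2 * ε / d - ε)) * d := by
          have expand : ((d - ε) * (2 * ε / d - ε)) * d
              = (d - ε) * (2 * ε) - (d - ε) * ε * d := by
            field_simp
          rw [expand]
          nlinarith [mul_pos hε hd0, mul_le_mul_of_nonneg_left hcase hε.le]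
        exact le_of_mul_le_mul_right h5 hd0
      have hCe : ε * V1.ncard ≤ (C.ncard : ℝ) := by
        have h7 : (d - ε) * ((2 * ε / d - ε) * V1.ncard) ≤ (d - ε) * U1.ncard :=
          mul_le_mul_of_nonneg_left hU1big hdε.le
        nlinarith [mul_le_mul_of_nonneg_right hcoef hN1pos.le]
      have h1 := dens_lower hreg hd hε hCsub hDsubV2 hCe hDe hV1 hV2
      have hCpos : (0:ℝ) < C.ncard := by nlinarith
      have hDpos : (0:ℝ) < D.ncard := by nlinarith
      have hpos : (0:ℝ) < (interCount G C D : ℝ) :=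
        lt_of_lt_of_le (mul_pos hdε (mul_pos hCpos hDpos)) h1
      have hposn : 0 < interCount G C D := by exact_mod_cast hpos
      exact exists_adj_of_interCount_pos G hposn
    · -- dense case : count non-edges
      push_neg at hcase
      have hnon := dens_lower hreg hd hε hU1 hU2 hU1e hU2e hV1 hV2
      have hadd := interCount_add_nonCount G U1 U2
      have haddR : (interCount G U1 U2 : ℝ) + (nonCount G U1 U2 : ℝ)
          = (U1.ncard : ℝ) * U2.ncard := by exact_mod_cast hadd
      have hIle : (interCount G U1 U2 : ℝ) ≤ (U1.ncard : ℝ) * U2.ncard := by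
        have h0 : (0:ℝ) ≤ (nonCount G U1 U2 : ℝ) := by positivity
        linarith
      have hnonle : (nonCount G U1 U2 : ℝ) ≤ (1 - d + ε) * (U1.ncard * U2.ncard) := by
        nlinarith
      have hmono : (nonCount G C D : ℝ) ≤ (nonCount G U1 U2 : ℝ) := by
        exact_mod_cast nonCount_mono G hCU1 hD
      have hDlb : (U2.ncard : ℝ) / 2 ≤ (D.ncard : ℝ) := by linarith
      have hu1_100 : (100:ℝ) ≤ (U1.ncard : ℝ) := le_trans hεN1c hU1e
      have hClow : (78/100) * (U1.ncard:ℝ) ≤ (d - ε) * U1.ncard - 1 := by nlinarith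
      have hfin : (nonCount G C D : ℝ) < (C.ncard : ℝ) * D.ncard := by
        have hc1 : (1 - d + ε) * ((U1.ncard : ℝ) * U2.ncard)
            < ((d - ε) * U1.ncard - 1) * ((U2.ncard : ℝ) / 2) := by nlinarith
        have hc2 : ((d - ε) * U1.ncard - 1) * ((U2.ncard : ℝ) / 2) ≤ (C.ncard : ℝ) * D.ncard := by
          have hC0 : (0:ℝ) ≤ (d - ε) * U1.ncard - 1 := by linarith
          have hD0 : (0:ℝ) ≤ (U2.ncard : ℝ) / 2 := by positivity
          exact mul_le_mul hGood hDlb hD0 (by positivity)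
        linarith
      have hfinn : nonCount G C D < C.ncard * D.ncard := by exact_mod_cast hfin
      exact exists_adj_of_nonCount_lt G hfinn
  obtain ⟨x, hx, x', hx', hadj⟩ := hkey
  rw [hC] at hx
  exact ⟨x, hx.1, x', hx', hx.2, hadj⟩

end Aux4

section Aux5
variable {V : Type} [Finite V]

lemma isPath_concat {G : SimpleGraph V} {u y x : V} {P : G.Walk u y} (h : P.IsPath)
    (hadj : G.Adj y x) (hx : x ∉ P.support) : (P.concat hadj).IsPath := by
  rw [SimpleGraph.Walk.isPath_def, SimpleGraph.Walk.support_concat]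
  refine List.Nodup.append h.support_nodup (List.nodup_singleton x) ?_
  intro a ha hb
  rw [List.mem_singleton] at hb
  exact hx (hb ▸ ha)

lemma mem_support_concat {G : SimpleGraph V} {u y x z : V} {P : G.Walk u y}
    (hadj : G.Adj y x) : z ∈ (P.concat hadj).support ↔ z ∈ P.support ∨ z = x := by
  rw [SimpleGraph.Walk.support_concat]
  simp

lemma ncard_le_add {A B C D : Set V} (h : A ⊆ B ∪ C ∪ D) :
    A.ncard ≤ B.ncard + C.ncard + D.ncard := by
  calc A.ncard ≤ (B ∪ C ∪ D).ncard := Set.ncard_le_ncard h (Set.toFinite _)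
    _ ≤ (B ∪ C).ncard + D.ncard := Set.ncard_union_le _ _
    _ ≤ B.ncard + C.ncard + D.ncard := by
        have := Set.ncard_union_le B C
        omega

lemma ncard_diff_ge {A : Set V} (B : Set V) :
    (A.ncard : ℝ) - B.ncard ≤ ((A \ B).ncard : ℝ) := by
  have h : A ⊆ (A \ B) ∪ B := by
    intro x hx
    by_cases hb : x ∈ B
    · exact Or.inr hb
    · exact Or.inl ⟨hx, hb⟩
  have := Set.ncard_le_ncard h (Set.toFinite _)
  have h2 := Set.ncard_union_le (A \ B) B
  have h3 : A.ncard ≤ (A \ B).ncard + B.ncard := le_trans this h2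
  have h4 := (Nat.cast_le (α := ℝ)).2 h3
  push_cast at h4
  linarith

lemma ncard_ge_sub_one {A : Set V} (x : V) :
    (A.ncard : ℝ) - 1 ≤ ((A \ {x}).ncard : ℝ) := by
  have := ncard_diff_ge (A := A) {x}
  have h1 : ({x} : Set V).ncard = 1 := Set.ncard_singleton x
  rw [h1] at this
  exact_mod_cast this

end Aux5

set_option maxHeartbeats 2000000 in
/-- For every `d > 0` and `0 < ε < d/100` there exists `n'` such that in every
strongly `ε`-regular pair `(V1, V2)` of density `d` with `|V1|, |V2| ≥ n'`, any `v1 ∈ V1`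
and `v2 ∈ V2` are joined by a path of any odd length `k` with
`3 ≤ k ≤ 2(1 - 2ε/d)·min(|V1|,|V2|)`, all of whose vertices lie in `V1 ∪ V2`. -/
theorem strongly_regular_odd_paths :
    ∀ d : ℝ, 0 < d → ∀ ε : ℝ, 0 < ε → ε < d / 100 →
    ∃ n' : ℕ, ∀ (V : Type) [Finite V], ∀ (G : SimpleGraph V) (V1 V2 : Set V),
      Disjoint V1 V2 → n' ≤ V1.ncard → n' ≤ V2.ncard →
      IsStronglyRegularPair G ε V1 V2 → dens G V1 V2 = d →
      ∀ v1 ∈ V1, ∀ v2 ∈ V2, ∀ k : ℕ, Odd k → 3 ≤ k →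
        (k : ℝ) ≤ 2 * (1 - 2 * ε / d) * min (V1.ncard : ℝ) (V2.ncard : ℝ) →
        ∃ p : G.Walk v1 v2, p.IsPath ∧ p.length = k ∧ ∀ x ∈ p.support, x ∈ V1 ∪ V2 := by
  intro d hd0 ε hε hεd
  refine ⟨⌈(ε⁻¹)^2⌉₊, ?_⟩
  intro V _ G V1 V2 hdisj hn1 hn2 hsreg hdens v1 hv1 v2 hv2 k hodd hk3 hkb
  obtain ⟨hreg, hdeg1, hdeg2⟩ := hsreg
  have hεd' : 100 * ε < d := by linarith
  have hN1 : (ε⁻¹)^2 ≤ (V1.ncard : ℝ) :=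
    le_trans (Nat.le_ceil _) (Nat.cast_le.2 hn1)
  have hN2 : (ε⁻¹)^2 ≤ (V2.ncard : ℝ) :=
    le_trans (Nat.le_ceil _) (Nat.cast_le.2 hn2)
  have hεinv : (0:ℝ) < ε⁻¹ := by positivity
  have hN1pos : (0:ℝ) < V1.ncard := lt_of_lt_of_le (by positivity) hN1
  have hN2pos : (0:ℝ) < V2.ncard := lt_of_lt_of_le (by positivity) hN2
  have hV1pos : 0 < V1.ncard := by exact_mod_cast hN1pos
  have hV2pos : 0 < V2.ncard := by exact_mod_cast hN2pos
  have hεN1 : 1/ε ≤ ε * V1.ncard := by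
    have := mul_le_mul_of_nonneg_left hN1 hε.le
    calc (1:ℝ)/ε = ε * (ε⁻¹)^2 := by field_simp
      _ ≤ ε * V1.ncard := this
  have hεN2 : 1/ε ≤ ε * V2.ncard := by
    have := mul_le_mul_of_nonneg_left hN2 hε.le
    calc (1:ℝ)/ε = ε * (ε⁻¹)^2 := by field_simp
      _ ≤ ε * V2.ncard := this
  -- d ≤ 1
  have hd1 : d ≤ 1 := by
    rw [← hdens, dens, div_le_one (by positivity)]
    have := interCount_le G V1 V2
    have := (Nat.cast_le (α := ℝ)).2 this
    push_cast at this
    linarith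
  have hε100 : ε < 1/100 := by linarith
  have h1ε : (100:ℝ) ≤ 1/ε := by
    rw [le_div_iff₀ hε]
    linarith
  have hεA : ε ≤ 2*ε/d - ε := by
    rw [le_sub_iff_add_le, ← sub_nonneg]
    have h5 : (2 * ε / d - (ε + ε)) * d = 2 * ε - (ε + ε) * d := by
      rw [sub_mul, div_mul_cancel₀ _ (ne_of_gt hd0)]
    nlinarith [h5]
  have hdisj' : ∀ z : V, z ∈ V2 → z ∉ V1 := fun z hz => Set.disjoint_right.1 hdisj hz
  have hdisj'' : ∀ z : V, z ∈ V1 → z ∉ V2 := fun z hz => Set.disjoint_left.1 hdisj hz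
  -- t
  obtain ⟨t, ht⟩ : ∃ t : ℕ, k = 2*t + 3 := by
    obtain ⟨m, hm⟩ := hodd
    refine ⟨(k-3)/2, by omega⟩
  have hcoef0 : 2*ε/d ≤ 1/50 := by
    rw [div_le_iff₀ hd0]
    nlinarith
  have hcoefpos : (0:ℝ) ≤ 1 - 2*ε/d := by linarith
  have htr : (t:ℝ) ≤ (1 - 2*ε/d) * min (V1.ncard : ℝ) (V2.ncard : ℝ) - 3/2 := by
    rw [ht] at hkb
    push_cast at hkb
    linarith
  have htr1 : (t:ℝ) ≤ (1 - 2*ε/d) * V1.ncard - 3/2 := by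
    have := mul_le_mul_of_nonneg_left (min_le_left (V1.ncard:ℝ) (V2.ncard:ℝ)) hcoefpos
    linarith
  have htr2 : (t:ℝ) ≤ (1 - 2*ε/d) * V2.ncard - 3/2 := by
    have := mul_le_mul_of_nonneg_left (min_le_right (V1.ncard:ℝ) (V2.ncard:ℝ)) hcoefpos
    linarith
  -- construct the reserve set S
  have hv2deg := hdeg2 v2 hv2
  rw [hdens] at hv2deg
  have hBc : ⌈ε * (V1.ncard:ℝ)⌉₊ ≤ ((G.neighborSet v2 ∩ V1) \ {v1}).ncard := by
    rw [← Nat.cast_le (α := ℝ)]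
    have h1 : (⌈ε*(V1.ncard:ℝ)⌉₊:ℝ) ≤ ε*V1.ncard + 1 := (Nat.ceil_lt_add_one (by positivity)).le
    have h2 := ncard_ge_sub_one (A := G.neighborSet v2 ∩ V1) (x := v1)
    have h3 : (1:ℝ)/ε * d ≥ 100 := by
      calc (1:ℝ)/ε * d ≥ (1/ε) * (100*ε) := by
            apply mul_le_mul_of_nonneg_left hεd'.le (by positivity)
        _ = 100 := by field_simp
    have h4 : 100 * (ε * (V1.ncard:ℝ)) ≤ d * V1.ncard := by
      nlinarith [mul_le_mul_of_nonneg_right hεd'.le hN1pos.le]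
    have h5 : (100:ℝ) ≤ ε * V1.ncard := le_trans h1ε hεN1
    linarith
  obtain ⟨S, hSsub, hScard⟩ := Set.exists_subset_card_eq hBc
  have hSV1 : S ⊆ V1 := fun w hw => ((hSsub hw).1).2
  have hSadj : ∀ w ∈ S, G.Adj v2 w := fun w hw => ((hSsub hw).1).1
  have hv1S : v1 ∉ S := fun h => (hSsub h).2 rfl
  have hSc1 : ε * V1.ncard ≤ (S.ncard : ℝ) := by
    rw [hScard]; exact Nat.le_ceil _
  have hSc2 : (S.ncard : ℝ) ≤ ε * V1.ncard + 1 := by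
    rw [hScard]; exact (Nat.ceil_lt_add_one (by positivity)).le
  have hSnV2 : ∀ z ∈ V2, z ∉ S := fun z hz hzS => hdisj' z hz (hSV1 hzS)
  -- cardinality helpers
  have hU1card : ∀ (Sup : Set V) (j : ℕ), (Sup ∩ V1).ncard = j →
      (V1.ncard:ℝ) - (S.ncard:ℝ) - (j:ℝ) ≤ (((V1 \ S) \ Sup).ncard : ℝ) := by
    intro Sup j hj
    have hsub : V1 ⊆ ((V1 \ S) \ Sup) ∪ S ∪ (Sup ∩ V1) := by
      intro x hx
      by_cases h1 : x ∈ S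
      · exact Or.inl (Or.inr h1)
      by_cases h2 : x ∈ Sup
      · exact Or.inr ⟨h2, hx⟩
      · exact Or.inl (Or.inl ⟨⟨hx, h1⟩, h2⟩)
    have h5 := ncard_le_add hsub
    rw [hj] at h5
    have h6 := (Nat.cast_le (α := ℝ)).2 h5
    push_cast at h6
    linarith
  have hU2card : ∀ (Sup : Set V) (j : ℕ), (Sup ∩ V2).ncard = j →
      (V2.ncard:ℝ) - (j:ℝ) - 1 ≤ (((V2 \ Sup) \ {v2}).ncard : ℝ) := by
    intro Sup j hj
    have hsub : V2 ⊆ ((V2 \ Sup) \ {v2}) ∪ (Sup ∩ V2) ∪ {v2} := by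
      intro x hx
      by_cases h1 : x ∈ Sup
      · exact Or.inl (Or.inr ⟨h1, hx⟩)
      by_cases h2 : x = v2
      · exact Or.inr h2
      · exact Or.inl (Or.inl ⟨⟨hx, h1⟩, h2⟩)
    have h5 := ncard_le_add hsub
    rw [hj, Set.ncard_singleton] at h5
    have h6 := (Nat.cast_le (α := ℝ)).2 h5
    push_cast at h6
    linarith
  -- numeric step bounds
  have hstep1 : ∀ j : ℕ, (j:ℝ) ≤ t →
      (2*ε/d - ε) * (V1.ncard:ℝ) ≤ (V1.ncard:ℝ) - (S.ncard:ℝ) - (j:ℝ) := by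
    intro j hj
    have e1 : (1 - 2*ε/d) * (V1.ncard:ℝ) = (V1.ncard:ℝ) - (2*ε/d)*(V1.ncard:ℝ) := by ring
    have e2 : (2*ε/d - ε) * (V1.ncard:ℝ) = (2*ε/d)*(V1.ncard:ℝ) - ε*(V1.ncard:ℝ) := by ring
    linarith [htr1, hSc2]
  have hstep2 : ∀ j : ℕ, (j:ℝ) ≤ (t:ℝ) - 1 →
      2*ε*(V2.ncard:ℝ) ≤ (V2.ncard:ℝ) - ((j:ℝ)+1) - 1 := by
    intro j hj
    have h7 : 2*ε ≤ 2*ε/d := by linarith [hεA]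
    have h8 : 2*ε*(V2.ncard:ℝ) ≤ (2*ε/d) * (V2.ncard:ℝ) :=
      mul_le_mul_of_nonneg_right h7 hN2pos.le
    have e1 : (1 - 2*ε/d) * (V2.ncard:ℝ) = (V2.ncard:ℝ) - (2*ε/d)*(V2.ncard:ℝ) := by ring
    linarith [htr2]
  -- the fixed bad set for S
  have hbadS := bad_small hreg hdens hε hV1pos hV2pos hSV1 hSc1
    (c := 1/2) (by
      have h1 : (1:ℝ)/ε ≤ (S.ncard:ℝ) := le_trans hεN1 hSc1
      have h2 : (99:ℝ)*ε ≤ d - ε := by linarith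
      have h3 : (0:ℝ) ≤ (S.ncard:ℝ) := by positivity
      nlinarith [mul_le_mul_of_nonneg_left h1 (show (0:ℝ) ≤ 99*ε by positivity),
        mul_le_mul_of_nonneg_right h2 h3,
        mul_one_div_cancel (ne_of_gt hε)])
  -- MAIN INDUCTION
  have main : ∀ i : ℕ, i ≤ t → ∃ (y : V) (P : G.Walk v1 y), P.IsPath ∧
      P.length = 2*i+1 ∧ y ∈ V2 ∧
      (∀ x ∈ P.support, x ∈ V1 ∪ V2) ∧ v2 ∉ P.support ∧ (∀ x ∈ P.support, x ∉ S) ∧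
      ({x | x ∈ P.support} ∩ V1).ncard = i+1 ∧ ({x | x ∈ P.support} ∩ V2).ncard = i+1 ∧
      (i < t → (d-ε) * ((((V1 \ S) \ {x | x ∈ P.support}).ncard : ℝ)) - 1 ≤
        ((((V1 \ S) \ {x | x ∈ P.support}) ∩ G.neighborSet y).ncard : ℝ)) ∧
      (i = t → (S ∩ G.neighborSet y).Nonempty) := by
    have hN1e4 : (10000:ℝ) ≤ V1.ncard := by
      have h9 : (100:ℝ) ≤ ε⁻¹ := by
        have : (1:ℝ)/ε = ε⁻¹ := one_div ε
        linarith [h1ε, this.symm.le, this.le]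
      nlinarith [hN1]
    have hN2e4 : (10000:ℝ) ≤ V2.ncard := by
      have h9 : (100:ℝ) ≤ ε⁻¹ := by
        have : (1:ℝ)/ε = ε⁻¹ := one_div ε
        linarith [h1ε, this.symm.le, this.le]
      nlinarith [hN2]
    have hεN1le : ε * (V1.ncard:ℝ) ≤ (V1.ncard:ℝ)/100 := by
      nlinarith [mul_le_mul_of_nonneg_right hε100.le hN1pos.le]
    have hεN2le : ε * (V2.ncard:ℝ) ≤ (V2.ncard:ℝ)/100 := by
      nlinarith [mul_le_mul_of_nonneg_right hε100.le hN2pos.le]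
    have h100εN2 : (100:ℝ) ≤ ε * V2.ncard := le_trans h1ε hεN2
    have hSGood : ∀ u, u ∈ V2 →
        u ∉ {u ∈ V2 | ((S ∩ G.neighborSet u).ncard : ℝ) < 1/2} →
        (S ∩ G.neighborSet u).Nonempty := by
      intro u hu hnb
      have h1 : ¬ (((S ∩ G.neighborSet u).ncard:ℝ) < 1/2) := fun hlt => hnb ⟨hu, hlt⟩
      push_neg at h1
      have h2 : (S ∩ G.neighborSet u).ncard ≠ 0 := by
        intro h0
        rw [h0] at h1
        norm_num at h1
      exact Set.nonempty_of_ncard_ne_zero h2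
    intro i
    induction i with
    | zero =>
      intro _
      have hv1deg := hdeg1 v1 hv1
      rw [hdens] at hv1deg
      have hone : (({v1} : Set V) ∩ V1).ncard = 1 := by
        have he : ({v1} : Set V) ∩ V1 = {v1} :=
          Set.inter_eq_self_of_subset_left (by simpa using hv1)
        rw [he, Set.ncard_singleton]
      have hU10c := hU1card {v1} 1 hone
      have hU10eps : ε * V1.ncard ≤ (((V1 \ S) \ {v1}).ncard : ℝ) := by
        push_cast at hU10c
        linarith
      have hbadU := bad_small hreg hdens hε hV1pos hV2pos
        (Set.diff_subset.trans Set.diff_subset) hU10eps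
        (c := (d-ε) * ((((V1 \ S) \ {v1}).ncard : ℝ))) le_rfl
      obtain ⟨y0, hy0⟩ : (((G.neighborSet v1 ∩ V2) \ {v2}) \
          ({u ∈ V2 | ((((V1 \ S) \ {v1}) ∩ G.neighborSet u).ncard : ℝ)
              < (d-ε) * ((((V1 \ S) \ {v1}).ncard : ℝ))} ∪
           {u ∈ V2 | ((S ∩ G.neighborSet u).ncard : ℝ) < 1/2})).Nonempty := by
        rw [← Set.ncard_pos (Set.toFinite _)]
        by_contra hcon
        push_neg at hcon
        have h0 : (((G.neighborSet v1 ∩ V2) \ {v2}) \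
            ({u ∈ V2 | ((((V1 \ S) \ {v1}) ∩ G.neighborSet u).ncard : ℝ)
                < (d-ε) * ((((V1 \ S) \ {v1}).ncard : ℝ))} ∪
             {u ∈ V2 | ((S ∩ G.neighborSet u).ncard : ℝ) < 1/2})).ncard = 0 :=
          Nat.le_zero.mp hcon
        have hsub : G.neighborSet v1 ∩ V2 ⊆
            (((G.neighborSet v1 ∩ V2) \ {v2}) \
              ({u ∈ V2 | ((((V1 \ S) \ {v1}) ∩ G.neighborSet u).ncard : ℝ)
                  < (d-ε) * ((((V1 \ S) \ {v1}).ncard : ℝ))} ∪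
               {u ∈ V2 | ((S ∩ G.neighborSet u).ncard : ℝ) < 1/2})) ∪ {v2} ∪
              ({u ∈ V2 | ((((V1 \ S) \ {v1}) ∩ G.neighborSet u).ncard : ℝ)
                  < (d-ε) * ((((V1 \ S) \ {v1}).ncard : ℝ))} ∪
               {u ∈ V2 | ((S ∩ G.neighborSet u).ncard : ℝ) < 1/2}) := by
          intro z hz
          by_cases h1 : z = v2
          · exact Or.inl (Or.inr h1)
          by_cases h2 : z ∈ ({u ∈ V2 | ((((V1 \ S) \ {v1}) ∩ G.neighborSet u).ncard : ℝ)
                  < (d-ε) * ((((V1 \ S) \ {v1}).ncard : ℝ))} ∪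
               {u ∈ V2 | ((S ∩ G.neighborSet u).ncard : ℝ) < 1/2} : Set V)
          · exact Or.inr h2
          · exact Or.inl (Or.inl ⟨⟨hz, h1⟩, h2⟩)
        have h5 := ncard_le_add hsub
        rw [h0, Set.ncard_singleton] at h5
        have h6 := Set.ncard_union_le
          ({u ∈ V2 | ((((V1 \ S) \ {v1}) ∩ G.neighborSet u).ncard : ℝ)
              < (d-ε) * ((((V1 \ S) \ {v1}).ncard : ℝ))})
          ({u ∈ V2 | ((S ∩ G.neighborSet u).ncard : ℝ) < 1/2})
        have h7 := (Nat.cast_le (α := ℝ)).2 h5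
        have h8 := (Nat.cast_le (α := ℝ)).2 h6
        push_cast at h7 h8
        have h9 : 100 * (ε * (V2.ncard:ℝ)) ≤ d * V2.ncard := by
          nlinarith [mul_le_mul_of_nonneg_right hεd'.le hN2pos.le]
        linarith [hbadU, hbadS, hv1deg, h100εN2]
      obtain ⟨⟨hy0N, hy0v2⟩, hy0b⟩ := hy0
      obtain ⟨hy0adjm, hy0V2⟩ := hy0N
      have hy0v2' : y0 ≠ v2 := hy0v2
      have hadj : G.Adj v1 y0 := hy0adjm
      have hy0nBU : ((((V1 \ S) \ {v1}) ∩ G.neighborSet y0).ncard : ℝ)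
          ≥ (d-ε) * ((((V1 \ S) \ {v1}).ncard : ℝ)) := by
        by_contra hlt
        push_neg at hlt
        exact hy0b (Or.inl ⟨hy0V2, hlt⟩)
      have hy0SG : (S ∩ G.neighborSet y0).Nonempty :=
        hSGood y0 hy0V2 (fun h => hy0b (Or.inr h))
      have hy0nV1 : y0 ∉ V1 := hdisj' y0 hy0V2
      have hv2nV1 : v2 ∉ V1 := hdisj' v2 hv2
      have hsupp : (SimpleGraph.Walk.cons hadj SimpleGraph.Walk.nil).support = [v1, y0] := rfl
      refine ⟨y0, SimpleGraph.Walk.cons hadj SimpleGraph.Walk.nil, ?_, ?_, hy0V2, ?_, ?_, ?_,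
        ?_, ?_, ?_, fun _ => hy0SG⟩
      · rw [SimpleGraph.Walk.isPath_def, hsupp]
        simp [hadj.ne]
      · simp
      · intro x hx
        rw [hsupp] at hx
        simp only [List.mem_cons, List.mem_singleton, List.not_mem_nil, or_false] at hx
        rcases hx with h | h
        · exact Or.inl (h ▸ hv1)
        · exact Or.inr (h ▸ hy0V2)
      · rw [hsupp]
        simp only [List.mem_cons, List.mem_singleton, List.not_mem_nil, or_false]
        rintro (h | h)
        · exact hv2nV1 (h ▸ hv1)
        · exact hy0v2' h.symm
      · intro x hx
        rw [hsupp] at hx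
        simp only [List.mem_cons, List.mem_singleton, List.not_mem_nil, or_false] at hx
        rcases hx with h | h
        · exact h ▸ hv1S
        · exact h ▸ hSnV2 y0 hy0V2
      · have he : ({x | x ∈ (SimpleGraph.Walk.cons hadj SimpleGraph.Walk.nil).support} ∩ V1)
            = {v1} := by
          ext z
          rw [Set.mem_inter_iff, Set.mem_setOf_eq, hsupp]
          simp only [List.mem_cons, List.mem_singleton, List.not_mem_nil, or_false,
            Set.mem_singleton_iff]
          constructor
          · rintro ⟨h | h, hz⟩
            · exact h
            · exact absurd hz (h ▸ hy0nV1)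
          · rintro rfl
            exact ⟨Or.inl rfl, hv1⟩
        rw [he, Set.ncard_singleton]
      · have he : ({x | x ∈ (SimpleGraph.Walk.cons hadj SimpleGraph.Walk.nil).support} ∩ V2)
            = {y0} := by
          ext z
          rw [Set.mem_inter_iff, Set.mem_setOf_eq, hsupp]
          simp only [List.mem_cons, List.mem_singleton, List.not_mem_nil, or_false,
            Set.mem_singleton_iff]
          constructor
          · rintro ⟨h | h, hz⟩
            · exact absurd hz (h ▸ hdisj'' v1 hv1)
            · exact h
          · rintro rfl
            exact ⟨Or.inr rfl, hy0V2⟩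
        rw [he, Set.ncard_singleton]
      · intro _
        have he : (V1 \ S) \ {x | x ∈ (SimpleGraph.Walk.cons hadj SimpleGraph.Walk.nil).support}
            = (V1 \ S) \ {v1} := by
          ext z
          rw [Set.mem_diff, Set.mem_diff, Set.mem_setOf_eq, hsupp]
          simp only [List.mem_cons, List.mem_singleton, List.not_mem_nil, or_false,
            Set.mem_singleton_iff]
          constructor
          · rintro ⟨hz, h⟩
            push_neg at h
            exact ⟨hz, h.1⟩
          · rintro ⟨hz, h⟩
            refine ⟨hz, ?_⟩
            push_neg
            exact ⟨h, fun hzy => (hzy ▸ hy0nV1) hz.1⟩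
        rw [he]
        linarith [hy0nBU]
    | succ i ih =>
      intro hit1
      have hit : i < t := hit1
      obtain ⟨y, P, hP, hlen, hyV2, hsupV, hv2sup, hsupS, hc1, hc2, hGoodCl, _⟩ :=
        ih (le_of_lt hit)
      have hGood := hGoodCl hit
      have hi1r : ((i:ℝ) + 1) ≤ (t:ℝ) := by exact_mod_cast hit1
      have hU1c := hU1card {x | x ∈ P.support} (i+1) hc1
      have hU1big : (2*ε/d - ε) * (V1.ncard:ℝ)
          ≤ (((V1 \ S) \ {x | x ∈ P.support}).ncard : ℝ) := by
        refine le_trans (hstep1 (i+1) (by push_cast; linarith)) ?_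
        push_cast at hU1c ⊢
        linarith
      have hU1eps : ε * V1.ncard ≤ (((V1 \ S) \ {x | x ∈ P.support}).ncard : ℝ) :=
        le_trans (mul_le_mul_of_nonneg_right hεA hN1pos.le) hU1big
      have hU2c := hU2card {x | x ∈ P.support} (i+1) hc2
      have hU2big : 2*ε*(V2.ncard:ℝ)
          ≤ (((V2 \ {x | x ∈ P.support}) \ {v2}).ncard : ℝ) := by
        refine le_trans (hstep2 i (by push_cast; linarith)) ?_
        push_cast at hU2c ⊢
        linarith
      have hU1subV1 : (V1 \ S) \ {x | x ∈ P.support} ⊆ V1 :=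
        Set.diff_subset.trans Set.diff_subset
      have hU2subV2 : (V2 \ {x | x ∈ P.support}) \ {v2} ⊆ V2 :=
        Set.diff_subset.trans Set.diff_subset
      have hbadU := bad_small hreg hdens hε hV1pos hV2pos hU1subV1 hU1eps
        (c := (d-ε) * ((((V1 \ S) \ {x | x ∈ P.support}).ncard : ℝ))) le_rfl
      -- choose the forbidden set according to whether this is the last step
      obtain ⟨D, hDsub, hDbig, hPOST⟩ :
          ∃ D : Set V, D ⊆ (V2 \ {x | x ∈ P.support}) \ {v2} ∧
          ((((V2 \ {x | x ∈ P.support}) \ {v2}).ncard : ℝ) - ε * V2.ncard ≤ (D.ncard:ℝ)) ∧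
          ∀ u ∈ D,
            (i+1 < t → (d-ε) * ((((V1 \ S) \ {x | x ∈ P.support}).ncard : ℝ))
              ≤ ((((V1 \ S) \ {x | x ∈ P.support}) ∩ G.neighborSet u).ncard : ℝ)) ∧
            (i+1 = t → (S ∩ G.neighborSet u).Nonempty) := by
        by_cases hlastc : i+1 = t
        · refine ⟨((V2 \ {x | x ∈ P.support}) \ {v2}) \
            {u ∈ V2 | ((S ∩ G.neighborSet u).ncard : ℝ) < 1/2}, Set.diff_subset, ?_, ?_⟩
          · have h1 := ncard_diff_ge (A := (V2 \ {x | x ∈ P.support}) \ {v2})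
              ({u ∈ V2 | ((S ∩ G.neighborSet u).ncard : ℝ) < 1/2})
            linarith [hbadS]
          · intro u hu
            refine ⟨fun hlt => absurd hlastc (by omega), fun _ => ?_⟩
            exact hSGood u (hu.1.1.1) hu.2
        · refine ⟨((V2 \ {x | x ∈ P.support}) \ {v2}) \
            {u ∈ V2 | ((((V1 \ S) \ {x | x ∈ P.support}) ∩ G.neighborSet u).ncard : ℝ)
              < (d-ε) * ((((V1 \ S) \ {x | x ∈ P.support}).ncard : ℝ))},
            Set.diff_subset, ?_, ?_⟩
          · have h1 := ncard_diff_ge (A := (V2 \ {x | x ∈ P.support}) \ {v2})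
              ({u ∈ V2 | ((((V1 \ S) \ {x | x ∈ P.support}) ∩ G.neighborSet u).ncard : ℝ)
                < (d-ε) * ((((V1 \ S) \ {x | x ∈ P.support}).ncard : ℝ))})
            linarith [hbadU]
          · intro u hu
            refine ⟨fun _ => ?_, fun heq => absurd heq hlastc⟩
            by_contra hlt
            push_neg at hlt
            exact hu.2 ⟨hu.1.1.1, hlt⟩
      obtain ⟨x, hxU1, x', hx'D, hyx, hxx'⟩ := pair_step hreg hdens hε hεd' hd1 hV1pos hV2pos
        hU1subV1 hU2subV2 hDsub hU1big hU2big hDbig (le_trans h1ε hεN1) hGood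
      have hxV1 : x ∈ V1 := hxU1.1.1
      have hxnS : x ∉ S := hxU1.1.2
      have hxnSup : x ∉ P.support := hxU1.2
      have hx'U2 := hDsub hx'D
      have hx'V2 : x' ∈ V2 := hx'U2.1.1
      have hx'nSup : x' ∉ P.support := hx'U2.1.2
      have hx'nv2 : x' ≠ v2 := hx'U2.2
      have hx'nV1 : x' ∉ V1 := hdisj' x' hx'V2
      have hxnV2 : x ∉ V2 := hdisj'' x hxV1
      have hx'nx : x' ≠ x := fun h => hx'nV1 (h ▸ hxV1)
      have hP1 := isPath_concat hP hyx hxnSup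
      have hx'n1 : x' ∉ (P.concat hyx).support := by
        rw [mem_support_concat]
        rintro (h | h)
        · exact hx'nSup h
        · exact hx'nx h
      have hP2 := isPath_concat hP1 hxx' hx'n1
      have hmem2 : ∀ z, z ∈ ((P.concat hyx).concat hxx').support ↔
          (z ∈ P.support ∨ z = x ∨ z = x') := by
        intro z
        rw [mem_support_concat, mem_support_concat, or_assoc]
      refine ⟨x', (P.concat hyx).concat hxx', hP2, ?_, hx'V2, ?_, ?_, ?_, ?_, ?_, ?_, ?_⟩
      · rw [SimpleGraph.Walk.length_concat, SimpleGraph.Walk.length_concat, hlen]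
        ring
      · intro z hz
        rcases (hmem2 z).1 hz with h | h | h
        · exact hsupV z h
        · exact Or.inl (h ▸ hxV1)
        · exact Or.inr (h ▸ hx'V2)
      · intro hz
        rcases (hmem2 v2).1 hz with h | h | h
        · exact hv2sup h
        · exact (hdisj' v2 hv2) (h ▸ hxV1)
        · exact hx'nv2 h.symm
      · intro z hz
        rcases (hmem2 z).1 hz with h | h | h
        · exact hsupS z h
        · exact h ▸ hxnS
        · exact h ▸ hSnV2 x' hx'V2
      · have e1 : ({z | z ∈ ((P.concat hyx).concat hxx').support} ∩ V1)
            = insert x ({z | z ∈ P.support} ∩ V1) := by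
          ext z
          rw [Set.mem_inter_iff, Set.mem_setOf_eq, hmem2 z, Set.mem_insert_iff,
            Set.mem_inter_iff, Set.mem_setOf_eq]
          constructor
          · rintro ⟨h | h | h, hz⟩
            · exact Or.inr ⟨h, hz⟩
            · exact Or.inl h
            · exact absurd hz (h ▸ hx'nV1)
          · rintro (h | ⟨h, hz⟩)
            · exact ⟨Or.inr (Or.inl h), h ▸ hxV1⟩
            · exact ⟨Or.inl h, hz⟩
        rw [e1, Set.ncard_insert_of_notMem (fun hc => hxnSup hc.1) (Set.toFinite _), hc1]
      · have e2 : ({z | z ∈ ((P.concat hyx).concat hxx').support} ∩ V2)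
            = insert x' ({z | z ∈ P.support} ∩ V2) := by
          ext z
          rw [Set.mem_inter_iff, Set.mem_setOf_eq, hmem2 z, Set.mem_insert_iff,
            Set.mem_inter_iff, Set.mem_setOf_eq]
          constructor
          · rintro ⟨h | h | h, hz⟩
            · exact Or.inr ⟨h, hz⟩
            · exact absurd hz (h ▸ hxnV2)
            · exact Or.inl h
          · rintro (h | ⟨h, hz⟩)
            · exact ⟨Or.inr (Or.inr h), h ▸ hx'V2⟩
            · exact ⟨Or.inl h, hz⟩
        rw [e2, Set.ncard_insert_of_notMem (fun hc => hx'nSup hc.1) (Set.toFinite _), hc2]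
      · -- goodness of the new endpoint
        intro hlt
        have eU1 : (V1 \ S) \ {z | z ∈ ((P.concat hyx).concat hxx').support}
            = ((V1 \ S) \ {z | z ∈ P.support}) \ {x} := by
          ext z
          simp only [Set.mem_diff, Set.mem_setOf_eq, Set.mem_singleton_iff, hmem2 z]
          constructor
          · rintro ⟨hz, h3⟩
            push_neg at h3
            exact ⟨⟨hz, h3.1⟩, h3.2.1⟩
          · rintro ⟨⟨hz, h3⟩, h4⟩
            refine ⟨hz, ?_⟩
            push_neg
            exact ⟨h3, h4, fun hzx' => (hzx' ▸ hx'nV1) hz.1⟩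
        rw [eU1]
        have hg := (hPOST x' hx'D).1 hlt
        have hcard := Set.ncard_diff_singleton_add_one hxU1 (Set.toFinite _)
        have hcardR : (((((V1 \ S) \ {z | z ∈ P.support}) \ {x}).ncard : ℝ))
            = ((((V1 \ S) \ {z | z ∈ P.support}).ncard : ℝ)) - 1 := by
          rw [← hcard]
          push_cast
          ring
        have hsub2 : ((((V1 \ S) \ {z | z ∈ P.support}) ∩ G.neighborSet x') \ {x})
            ⊆ (((V1 \ S) \ {z | z ∈ P.support}) \ {x}) ∩ G.neighborSet x' := by
          intro z hz
          exact ⟨⟨hz.1.1, hz.2⟩, hz.1.2⟩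
        have h7 := (Nat.cast_le (α := ℝ)).2 (Set.ncard_le_ncard hsub2 (Set.toFinite _))
        have h8 := ncard_ge_sub_one
          (A := (((V1 \ S) \ {z | z ∈ P.support}) ∩ G.neighborSet x')) (x := x)
        have e9 : (d-ε) * (((((V1 \ S) \ {z | z ∈ P.support}).ncard : ℝ)) - 1)
            = (d-ε) * ((((V1 \ S) \ {z | z ∈ P.support}).ncard : ℝ)) - (d-ε) := by ring
        rw [hcardR]
        have hg' : (d - ε) * ((((V1 \ S) \ {z | z ∈ P.support}).ncard : ℝ))
            ≤ ((((V1 \ S) \ {z | z ∈ P.support}) ∩ G.neighborSet x').ncard : ℝ) := hg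
        linarith
      · intro heq
        exact (hPOST x' hx'D).2 heq

  -- FINAL ASSEMBLY
  obtain ⟨y, P, hP, hlen, hyV2, hsupV, hv2sup, hsupS, _, _, _, hSG⟩ := main t le_rfl
  obtain ⟨w, hwS, hwN⟩ := hSG rfl
  have hyw : G.Adj y w := hwN
  have hwV1 : w ∈ V1 := hSV1 hwS
  have hwnSup : w ∉ P.support := fun h => hsupS w h hwS
  have hwv2 : G.Adj w v2 := (hSadj w hwS).symm
  have hQ1 := isPath_concat hP hyw hwnSup
  have hv2nQ1 : v2 ∉ (P.concat hyw).support := by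
    rw [mem_support_concat]
    rintro (h | h)
    · exact hv2sup h
    · exact hdisj'' w hwV1 (h ▸ hv2)
  refine ⟨(P.concat hyw).concat hwv2, isPath_concat hQ1 hwv2 hv2nQ1, ?_, ?_⟩
  · rw [SimpleGraph.Walk.length_concat, SimpleGraph.Walk.length_concat, hlen, ht]
  · intro x hx
    rw [mem_support_concat] at hx
    rcases hx with hx | hx
    · rw [mem_support_concat] at hx
      rcases hx with hx | hx
      · exact hsupV x hx
      · exact Or.inl (hx ▸ hwV1)
    · exact Or.inr (hx ▸ hv2)
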